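/- Let d_i* = log((p_i − s_i)/(p_i − y_i)) / log(1 − s), where 0 ≤ y_i ≤ s_i < p_i and 0 < s < 1. Then the function f(d) = ((p_i−y_i)/(s_i−y_i))^{s_i−y_i} · ((p_i−y_i)/(p_i−s_i))^{p_i−s_i} · (1−s)^{d(p_i−s_i)} · (1−(1−s)^d)^{s_i−y_i}, for d > 0, attains its maximum at d = d_i*, and f(d_i*) = 1; in particular f(d) ≤ 1 for all d > 0. -/

import Mathlib

theorem f_max_at_dstar (p s' y s : ℝ) (hy : 0 ≤ y) (hys : y < s') (hsp : s' < p)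
    (hs0 : 0 < s) (hs1 : s < 1)
    (f : ℝ → ℝ)
    (hf : f = fun d => ((p - y) / (s' - y)) ^ (s' - y) * ((p - y) / (p - s')) ^ (p - s') *
      (1 - s) ^ (d * (p - s')) * (1 - (1 - s) ^ d) ^ (s' - y))
    (dstar : ℝ) (hdstar : dstar = Real.log ((p - s') / (p - y)) / Real.log (1 - s)) :
    f dstar = 1 ∧ (∀ d : ℝ, 0 < d → f d ≤ f dstar) ∧ (∀ d : ℝ, 0 < d → f d ≤ 1) := by
  have ha : (0:ℝ) < s' - y := by linarith
  have hb : (0:ℝ) < p - s' := by linarith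
  have hc : (0:ℝ) < p - y := by linarith
  have h1s : (0:ℝ) < 1 - s := by linarith
  have h1s1 : 1 - s < 1 := by linarith
  have hlogne : Real.log (1 - s) ≠ 0 := ne_of_lt (Real.log_neg h1s h1s1)
  -- value of (1-s)^dstar
  have htstar : (1 - s) ^ dstar = (p - s') / (p - y) := by
    rw [Real.rpow_def_of_pos h1s, hdstar]
    have : Real.log (1 - s) * (Real.log ((p - s') / (p - y)) / Real.log (1 - s))
        = Real.log ((p - s') / (p - y)) := by field_simp
    rw [this, Real.exp_log (by positivity)]
  -- main inequality
  have key : ∀ t : ℝ, 0 < t → t < 1 →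
      ((p - y) / (s' - y)) ^ (s' - y) * ((p - y) / (p - s')) ^ (p - s') *
        t ^ (p - s') * (1 - t) ^ (s' - y) ≤ 1 := by
    intro t ht ht1
    have ht1' : (0:ℝ) < 1 - t := by linarith
    set w₁ : ℝ := (p - s') / (p - y) with hw1
    set w₂ : ℝ := (s' - y) / (p - y) with hw2
    have hw1pos : 0 < w₁ := div_pos hb hc
    have hw2pos : 0 < w₂ := div_pos ha hc
    have hwsum : w₁ + w₂ = 1 := by rw [hw1, hw2]; field_simp; ring
    have hgm := Real.geom_mean_le_arith_mean2_weighted hw1pos.le hw2pos.le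
      (div_nonneg ht.le hw1pos.le) (div_nonneg ht1'.le hw2pos.le) hwsum
    have harith : w₁ * (t / w₁) + w₂ * ((1 - t) / w₂) = 1 := by
      field_simp; ring
    rw [harith] at hgm
    have hX0 : 0 ≤ (t / w₁) ^ w₁ * ((1 - t) / w₂) ^ w₂ := by positivity
    have hpow := Real.rpow_le_one hX0 hgm hc.le
    rw [Real.mul_rpow (by positivity) (by positivity),
        ← Real.rpow_mul (by positivity), ← Real.rpow_mul (by positivity)] at hpow
    have e1 : w₁ * (p - y) = p - s' := by rw [hw1]; field_simp
    have e2 : w₂ * (p - y) = s' - y := by rw [hw2]; field_simp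
    rw [e1, e2] at hpow
    have e3 : t / w₁ = t * ((p - y) / (p - s')) := by rw [hw1]; field_simp
    have e4 : (1 - t) / w₂ = (1 - t) * ((p - y) / (s' - y)) := by rw [hw2]; field_simp
    rw [e3, e4, Real.mul_rpow ht.le (by positivity),
        Real.mul_rpow ht1'.le (by positivity)] at hpow
    calc ((p - y) / (s' - y)) ^ (s' - y) * ((p - y) / (p - s')) ^ (p - s') *
          t ^ (p - s') * (1 - t) ^ (s' - y)
        = t ^ (p - s') * ((p - y) / (p - s')) ^ (p - s') *
          ((1 - t) ^ (s' - y) * ((p - y) / (s' - y)) ^ (s' - y)) := by ring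
      _ ≤ 1 := hpow
  -- f dstar = 1
  have hf1 : f dstar = 1 := by
    rw [hf]
    simp only
    rw [Real.rpow_mul h1s.le dstar (p - s'), htstar]
    have h2 : 1 - (p - s') / (p - y) = (s' - y) / (p - y) := by field_simp; ring
    rw [h2]
    have h3 : ((p - y) / (s' - y)) ^ (s' - y) * ((p - y) / (p - s')) ^ (p - s') *
        ((p - s') / (p - y)) ^ (p - s') * ((s' - y) / (p - y)) ^ (s' - y)
        = ((p - y) / (s' - y) * ((s' - y) / (p - y))) ^ (s' - y) *
          ((p - y) / (p - s') * ((p - s') / (p - y))) ^ (p - s') := by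
      rw [Real.mul_rpow (by positivity) (by positivity),
          Real.mul_rpow (by positivity) (by positivity)]
      ring
    rw [h3]
    have h4 : (p - y) / (s' - y) * ((s' - y) / (p - y)) = 1 := by field_simp
    have h5 : (p - y) / (p - s') * ((p - s') / (p - y)) = 1 := by field_simp
    rw [h4, h5, Real.one_rpow, Real.one_rpow, mul_one]
  have hle1 : ∀ d : ℝ, 0 < d → f d ≤ 1 := by
    intro d hd
    rw [hf]
    simp only
    rw [Real.rpow_mul h1s.le d (p - s')]
    exact key ((1 - s) ^ d) (Real.rpow_pos_of_pos h1s d)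
      (Real.rpow_lt_one h1s.le h1s1 hd)
  exact ⟨hf1, fun d hd => hf1 ▸ hle1 d hd, hle1⟩
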